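/- Let γ > 0, κ > 0, τ > 0, and let L be a real m × m matrix with ‖exp(t L_κ)‖_∞ ≤ e^{−κt} for all t ≥ 0, where L_κ = L − κI. Let N : ℝ^m → ℝ^m satisfy ‖N(w)‖ ≤ κγ whenever ‖w‖ ≤ γ. Fix i ≥ 1 and coefficients a_{i0}, …, a_{i,i−1} ≥ 0, abscissas 0 = c₀ ≤ c₁ ≤ ⋯ ≤ c_i. Suppose vectors u^{(0)}, …, u^{(i−1)} ∈ ℝ^m all satisfy ‖u^{(j)}‖ ≤ γ, and define u^{(i)} = exp(c_i τ L_κ) u^{(0)} + τ Σ_{j=0}^{i−1} a_{ij} exp((c_i − c_j) τ L_κ) N(u^{(j)}). Then ‖u^{(i)}‖ ≤ g_i(κτ) γ, where g_i(x) = e^{−c_i x} + x Σ_{j=0}^{i−1} a_{ij} e^{−(c_i−c_j)x}. -/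

import Mathlib

attribute [local instance] Matrix.linftyOpNormedRing Matrix.linftyOpNormedAlgebra

/-- Remark 3.3 (sharp single-stage bound): if all previous stages lie in the `γ`-ball, the
stage `u^{(i)} = exp(cᵢτL_κ)u^{(0)} + τ Σ_{j<i} aᵢⱼ exp((cᵢ−cⱼ)τL_κ) N(u^{(j)})` satisfies
`‖u^{(i)}‖ ≤ gᵢ(κτ)γ` with `gᵢ(x) = e^{−cᵢx} + x Σ_{j<i} aᵢⱼ e^{−(cᵢ−cⱼ)x}`. -/
theorem stmt_5 (m : ℕ) (γ κ τ : ℝ) (hγ : 0 < γ) (hκ : 0 < κ) (hτ : 0 < τ)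
    (L Lκ : Matrix (Fin m) (Fin m) ℝ)
    (hLκ : Lκ = L - κ • (1 : Matrix (Fin m) (Fin m) ℝ))
    (hsemi : ∀ t : ℝ, 0 ≤ t → ‖NormedSpace.exp (t • Lκ)‖ ≤ Real.exp (-κ * t))
    (N : (Fin m → ℝ) → (Fin m → ℝ))
    (hN : ∀ w : Fin m → ℝ, ‖w‖ ≤ γ → ‖N w‖ ≤ κ * γ)
    (i : ℕ) (hi : 1 ≤ i)
    (a : ℕ → ℝ) (ha : ∀ j < i, 0 ≤ a j)
    (c : ℕ → ℝ) (hc0 : c 0 = 0) (hmono : ∀ j < i, c j ≤ c (j + 1))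
    (u : ℕ → (Fin m → ℝ)) (hu : ∀ j < i, ‖u j‖ ≤ γ)
    (ui : Fin m → ℝ)
    (hui : ui = (NormedSpace.exp ((c i * τ) • Lκ)).mulVec (u 0) +
      τ • ∑ j ∈ Finset.range i,
        a j • (NormedSpace.exp (((c i - c j) * τ) • Lκ)).mulVec (N (u j))) :
    ‖ui‖ ≤ (Real.exp (-(c i) * (κ * τ)) +
      (κ * τ) * ∑ j ∈ Finset.range i, a j * Real.exp (-(c i - c j) * (κ * τ))) * γ := by
  -- monotonicity of c on [0, i]
  have hmono' : ∀ k, k ≤ i → ∀ j, j ≤ k → c j ≤ c k := by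
    intro k hk
    induction k with
    | zero => intro j hj; rw [Nat.le_zero.mp hj]
    | succ n ih =>
      intro j hj
      rcases Nat.le_succ_iff.mp hj with h | h
      · exact le_trans (ih (by omega) j h) (hmono n (by omega))
      · rw [h]
  have hcle : ∀ j, j ≤ i → c j ≤ c i := fun j hj => hmono' i le_rfl j hj
  have hcnn : ∀ j, j ≤ i → 0 ≤ c j := by
    intro j hj
    have := hmono' j hj 0 (Nat.zero_le j)
    rwa [hc0] at this
  -- norm of the first term
  have h1 : ‖(NormedSpace.exp ((c i * τ) • Lκ)).mulVec (u 0)‖ ≤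
      Real.exp (-κ * (c i * τ)) * γ := by
    calc ‖(NormedSpace.exp ((c i * τ) • Lκ)).mulVec (u 0)‖
        ≤ ‖NormedSpace.exp ((c i * τ) • Lκ)‖ * ‖u 0‖ :=
          Matrix.linfty_opNorm_mulVec _ _
      _ ≤ Real.exp (-κ * (c i * τ)) * γ := by
          apply mul_le_mul (hsemi _ (mul_nonneg (hcnn i le_rfl) hτ.le))
            (hu 0 hi) (norm_nonneg _) (Real.exp_nonneg _)
  -- norm of each summand
  have h2 : ∀ j ∈ Finset.range i,
      ‖a j • (NormedSpace.exp (((c i - c j) * τ) • Lκ)).mulVec (N (u j))‖ ≤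
        a j * (Real.exp (-κ * ((c i - c j) * τ)) * (κ * γ)) := by
    intro j hj
    rw [Finset.mem_range] at hj
    rw [norm_smul, Real.norm_eq_abs, abs_of_nonneg (ha j hj)]
    apply mul_le_mul_of_nonneg_left _ (ha j hj)
    calc ‖(NormedSpace.exp (((c i - c j) * τ) • Lκ)).mulVec (N (u j))‖
        ≤ ‖NormedSpace.exp (((c i - c j) * τ) • Lκ)‖ * ‖N (u j)‖ :=
          Matrix.linfty_opNorm_mulVec _ _
      _ ≤ Real.exp (-κ * ((c i - c j) * τ)) * (κ * γ) := by
          apply mul_le_mul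
            (hsemi _ (mul_nonneg (sub_nonneg.mpr (hcle j hj.le)) hτ.le))
            (hN _ (hu j hj)) (norm_nonneg _) (Real.exp_nonneg _)
  have hmain : ‖ui‖ ≤ Real.exp (-κ * (c i * τ)) * γ +
      τ * ∑ j ∈ Finset.range i, a j * (Real.exp (-κ * ((c i - c j) * τ)) * (κ * γ)) := by
    rw [hui]
    refine le_trans (norm_add_le _ _) (add_le_add h1 ?_)
    rw [norm_smul, Real.norm_eq_abs, abs_of_pos hτ]
    exact mul_le_mul_of_nonneg_left
      (le_trans (norm_sum_le _ _) (Finset.sum_le_sum h2)) hτ.le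
  refine hmain.trans (le_of_eq ?_)
  rw [add_mul, mul_assoc (κ * τ), Finset.sum_mul, Finset.mul_sum, Finset.mul_sum]
  congr 1
  · rw [show -κ * (c i * τ) = -(c i) * (κ * τ) by ring]
  · apply Finset.sum_congr rfl
    intro j _
    rw [show -κ * ((c i - c j) * τ) = -(c i - c j) * (κ * τ) by ring]
    ring
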